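/- Let p be a prime and s₁, s₂ real numbers with s₁ > 2 and s₂ > 2. Set X = p^{−s₁} and Y = p^{−s₂}. Then (1 − p⁻¹)⁻² times the integral over {(x,y,z) ∈ ℤ_p³ : ‖z‖² ≤ ‖x‖ and ‖y‖ ≤ ‖x‖ < ‖z‖} of ‖x‖^{s₁−2}·‖z‖^{s₂−1} with respect to μ³ equals X²Y / ((1 − X²Y)(1 − XY)). -/

import Mathlib

open MeasureTheory ENNReal
section Aux

variable {p : ℕ} [Fact p.Prime]

theorem ball_meas [MeasurableSpace ℤ_[p]] [BorelSpace ℤ_[p]]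
    (μ : Measure ℤ_[p]) [μ.IsAddHaarMeasure] (hμ : μ Set.univ = 1) (n : ℕ) :
    μ {x : ℤ_[p] | ‖x‖ ≤ (p : ℝ) ^ (-n : ℤ)} = ((p : ℝ≥0∞) ^ n)⁻¹ := by
  set B : Set ℤ_[p] := {x : ℤ_[p] | ‖x‖ ≤ (p : ℝ) ^ (-n : ℤ)} with hB
  have hBmeas : MeasurableSet B :=
    (isClosed_le (by continuity) continuous_const).measurableSet
  haveI : NeZero (p ^ n) := ⟨pow_ne_zero n (Fact.out : p.Prime).ne_zero⟩
  set F : ZMod (p ^ n) → Set ℤ_[p] := fun r => PadicInt.toZModPow n ⁻¹' {r} with hF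
  have hfiber : ∀ r : ZMod (p ^ n), F r = ((-(ZMod.val r : ℤ_[p])) + ·) ⁻¹' B := by
    intro r
    ext x
    have hc : PadicInt.toZModPow n ((ZMod.val r : ℤ_[p])) = r := by
      rw [map_natCast, ZMod.natCast_val, ZMod.cast_id]
    simp only [hF, Set.mem_preimage, Set.mem_singleton_iff, hB, Set.mem_setOf_eq]
    have h1 : PadicInt.toZModPow n x = r ↔
        PadicInt.toZModPow n (x - (ZMod.val r : ℤ_[p])) = 0 := by
      rw [map_sub, hc, sub_eq_zero]
    rw [h1, ← RingHom.mem_ker, PadicInt.ker_toZModPow,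
      ← PadicInt.norm_le_pow_iff_mem_span_pow, ← neg_add_eq_sub]
  have hmeasF : ∀ r, μ (F r) = μ B := by
    intro r
    rw [hfiber r]
    exact measure_preimage_add μ _ B
  have hdisj : Pairwise (Function.onFun Disjoint F) := by
    intro r s hrs
    simp only [Function.onFun, hF]
    exact Set.disjoint_left.2 fun x hx hx' => hrs (hx.symm.trans hx')
  have hunion : (⋃ r, F r) = Set.univ := by
    ext x; simp [hF]
  have hmeasFset : ∀ r, MeasurableSet (F r) := by
    intro r
    rw [hfiber r]
    exact (measurable_const_add _) hBmeas
  have key : (p : ℝ≥0∞) ^ n * μ B = 1 := by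
    have := measure_iUnion hdisj hmeasFset (μ := μ)
    rw [hunion, hμ] at this
    rw [this, tsum_fintype]
    simp only [hmeasF, Finset.sum_const, Finset.card_univ, ZMod.card, nsmul_eq_mul]
    push_cast
    ring
  have hN0 : ((p : ℝ≥0∞) ^ n) ≠ 0 := by
    exact pow_ne_zero n (by exact_mod_cast (Fact.out : p.Prime).ne_zero)
  have hNtop : ((p : ℝ≥0∞) ^ n) ≠ ⊤ := by
    exact ENNReal.pow_ne_top (ENNReal.natCast_ne_top p)
  have h2 := ENNReal.mul_inv_cancel hN0 hNtop
  rw [← h2] at key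
  exact (ENNReal.mul_right_inj hN0 hNtop).mp key

theorem pinv_ofReal (n : ℕ) :
    (((p : ℝ≥0∞)) ^ n)⁻¹ = ENNReal.ofReal ((p : ℝ) ^ (-n : ℤ)) := by
  have hp : (0 : ℝ) < (p : ℝ) := by exact_mod_cast (Fact.out : p.Prime).pos
  rw [zpow_neg, zpow_natCast, ENNReal.ofReal_inv_of_pos (pow_pos hp n),
    ENNReal.ofReal_pow hp.le, ENNReal.ofReal_natCast]

theorem sphere_eq_diff (n : ℕ) :
    {x : ℤ_[p] | ‖x‖ = (p : ℝ) ^ (-n : ℤ)} =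
      {x : ℤ_[p] | ‖x‖ ≤ (p : ℝ) ^ (-n : ℤ)} \
        {x : ℤ_[p] | ‖x‖ ≤ (p : ℝ) ^ (-(n + 1 : ℕ) : ℤ)} := by
  have hp1 : (1 : ℝ) < (p : ℝ) := by exact_mod_cast (Fact.out : p.Prime).one_lt
  ext x
  have key : ‖x‖ ≤ (p : ℝ) ^ (-(n + 1 : ℕ) : ℤ) ↔ ‖x‖ < (p : ℝ) ^ (-n : ℤ) := by
    rw [PadicInt.norm_le_pow_iff_norm_lt_pow_add_one]
    congr! 2
    push_cast; ring
  simp only [Set.mem_setOf_eq, Set.mem_diff, key]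
  constructor
  · rintro h; exact ⟨le_of_eq h, by rw [h]; exact lt_irrefl _⟩
  · rintro ⟨h1, h2⟩; exact le_antisymm h1 (not_lt.mp h2)

theorem sphere_meas [MeasurableSpace ℤ_[p]] [BorelSpace ℤ_[p]]
    (μ : Measure ℤ_[p]) [μ.IsAddHaarMeasure] (hμ : μ Set.univ = 1) (n : ℕ)
    (hball : ∀ m : ℕ, μ {x : ℤ_[p] | ‖x‖ ≤ (p : ℝ) ^ (-m : ℤ)} = ((p : ℝ≥0∞) ^ m)⁻¹) :
    μ {x : ℤ_[p] | ‖x‖ = (p : ℝ) ^ (-n : ℤ)} =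
      ENNReal.ofReal ((1 - (p : ℝ)⁻¹) * (p : ℝ) ^ (-n : ℤ)) := by
  have hp : (0 : ℝ) < (p : ℝ) := by exact_mod_cast (Fact.out : p.Prime).pos
  have hp1 : (1 : ℝ) < (p : ℝ) := by exact_mod_cast (Fact.out : p.Prime).one_lt
  have hsub : {x : ℤ_[p] | ‖x‖ ≤ (p : ℝ) ^ (-(n + 1 : ℕ) : ℤ)} ⊆
      {x : ℤ_[p] | ‖x‖ ≤ (p : ℝ) ^ (-n : ℤ)} := by
    intro x hx
    refine le_trans hx (zpow_le_zpow_right₀ hp1.le (by push_cast; omega))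
  have hmeas : MeasurableSet {x : ℤ_[p] | ‖x‖ ≤ (p : ℝ) ^ (-(n + 1 : ℕ) : ℤ)} :=
    (isClosed_le (by continuity) continuous_const).measurableSet
  have hfin : μ {x : ℤ_[p] | ‖x‖ ≤ (p : ℝ) ^ (-(n + 1 : ℕ) : ℤ)} ≠ ⊤ := by
    rw [hball]
    exact ENNReal.inv_ne_top.2 (pow_ne_zero _ (by
      exact_mod_cast (Fact.out : p.Prime).ne_zero))
  rw [sphere_eq_diff, measure_diff hsub hmeas.nullMeasurableSet hfin, hball, hball,
    pinv_ofReal, pinv_ofReal, ← ENNReal.ofReal_sub _ (by positivity)]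
  congr 1
  have hpne : (p : ℝ) ≠ 0 := hp.ne'
  push_cast
  rw [show (-((n : ℤ) + 1)) = (-n) + (-1) by ring, zpow_add₀ hpne, zpow_neg_one]
  ring
end Aux

set_option maxHeartbeats 1000000 in
theorem stmt9 (p : ℕ) [Fact p.Prime]
    [MeasurableSpace ℤ_[p]] [BorelSpace ℤ_[p]]
    (μ : Measure ℤ_[p]) [μ.IsAddHaarMeasure] (hμ : μ Set.univ = 1)
    (s₁ s₂ : ℝ) (hs₁ : 2 < s₁) (hs₂ : 2 < s₂)
    (X Y : ℝ) (hX : X = (p : ℝ) ^ (-s₁)) (hY : Y = (p : ℝ) ^ (-s₂)) :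
    ((1 - (p : ℝ)⁻¹) ^ 2)⁻¹ *
      ∫ w in {w : ℤ_[p] × ℤ_[p] × ℤ_[p] | ‖w.2.2‖ ^ 2 ≤ ‖w.1‖ ∧ ‖w.2.1‖ ≤ ‖w.1‖ ∧ ‖w.1‖ < ‖w.2.2‖},
        ‖w.1‖ ^ (s₁ - 2) * ‖w.2.2‖ ^ (s₂ - 1) ∂(μ.prod (μ.prod μ)) =
      X ^ 2 * Y / ((1 - X ^ 2 * Y) * (1 - X * Y)) := by
  have hpp : p.Prime := Fact.out
  have hp0 : (0:ℝ) < p := by exact_mod_cast hpp.pos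
  have hp1 : (1:ℝ) < p := by exact_mod_cast hpp.one_lt
  haveI : IsFiniteMeasure μ := ⟨by rw [hμ]; exact ENNReal.one_lt_top⟩
  set ν := μ.prod (μ.prod μ) with hν
  have hX0 : 0 < X := hX ▸ Real.rpow_pos_of_pos hp0 _
  have hX1 : X < 1 := hX ▸ Real.rpow_lt_one_of_one_lt_of_neg hp1 (by linarith)
  have hY0 : 0 < Y := hY ▸ Real.rpow_pos_of_pos hp0 _
  have hY1 : Y < 1 := hY ▸ Real.rpow_lt_one_of_one_lt_of_neg hp1 (by linarith)
  have hr₁0 : 0 < X^2*Y := by positivity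
  have hr₁1 : X^2*Y < 1 := by nlinarith
  have hr₂0 : 0 < X*Y := by positivity
  have hr₂1 : X*Y < 1 := by nlinarith
  have hq0 : (0:ℝ) < 1 - (p:ℝ)⁻¹ := by
    have h1 : (p:ℝ)⁻¹ < 1 := by
      rw [inv_lt_one_iff₀]; right; exact hp1
    linarith
  set a : ℕ × ℕ → ℕ := fun q => 2*q.1 + q.2 + 2 with ha
  set c : ℕ × ℕ → ℕ := fun q => q.1 + q.2 + 1 with hc
  set T : ℕ × ℕ → Set (ℤ_[p] × ℤ_[p] × ℤ_[p]) := fun q =>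
    {x : ℤ_[p] | ‖x‖ = (p:ℝ) ^ (-(a q) : ℤ)} ×ˢ
      ({y : ℤ_[p] | ‖y‖ ≤ (p:ℝ) ^ (-(a q) : ℤ)} ×ˢ
        {z : ℤ_[p] | ‖z‖ = (p:ℝ) ^ (-(c q) : ℤ)}) with hT
  -- set equality
  have hS : {w : ℤ_[p] × ℤ_[p] × ℤ_[p] | ‖w.2.2‖ ^ 2 ≤ ‖w.1‖ ∧ ‖w.2.1‖ ≤ ‖w.1‖ ∧ ‖w.1‖ < ‖w.2.2‖}
      = ⋃ q, T q := by
    ext ⟨x, y, z⟩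
    simp only [Set.mem_setOf_eq, Set.mem_iUnion, hT, Set.mem_prod]
    constructor
    · rintro ⟨h1, h2, h3⟩
      have hz : z ≠ 0 := by
        intro h
        rw [h, norm_zero] at h3
        exact absurd h3 (not_lt.2 (norm_nonneg x))
      have hx : x ≠ 0 := by
        intro h
        rw [h, norm_zero] at h1 h3
        nlinarith [norm_nonneg z]
      have hnx : ‖x‖ = (p:ℝ) ^ (-(x.valuation:ℤ)) := PadicInt.norm_eq_zpow_neg_valuation hx
      have hnz : ‖z‖ = (p:ℝ) ^ (-(z.valuation:ℤ)) := PadicInt.norm_eq_zpow_neg_valuation hz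
      have hA0 : 0 ≤ (x.valuation:ℤ) := Int.natCast_nonneg _
      have hC0 : 0 ≤ (z.valuation:ℤ) := Int.natCast_nonneg _
      have hCA : (z.valuation:ℤ) < x.valuation := by
        rw [hnx, hnz] at h3
        have := (zpow_lt_zpow_iff_right₀ hp1).1 h3
        omega
      have hA2C : (x.valuation:ℤ) ≤ 2 * z.valuation := by
        rw [hnx, hnz, ← zpow_natCast ((p:ℝ) ^ (-(z.valuation:ℤ))) 2, ← zpow_mul] at h1
        have := (zpow_le_zpow_iff_right₀ hp1).1 h1
        omega
      refine ⟨(((x.valuation:ℤ) - z.valuation - 1).toNat, (2*(z.valuation:ℤ) - x.valuation).toNat),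
        ?_, ?_, ?_⟩
      · rw [hnx]
        congr 1
        simp only [ha]
        push_cast
        omega
      · have haq : (-(a (((x.valuation:ℤ) - z.valuation - 1).toNat,
            (2*(z.valuation:ℤ) - x.valuation).toNat)) : ℤ) = -(x.valuation:ℤ) := by
          simp only [ha]; push_cast; omega
        rw [haq, ← hnx]
        exact h2
      · rw [hnz]
        congr 1
        simp only [hc]
        push_cast
        omega
    · rintro ⟨⟨j, d⟩, h1, h2, h3⟩
      have hac : a (j, d) ≤ 2 * c (j, d) := by simp only [ha, hc]; omega
      have hca : c (j, d) < a (j, d) := by simp only [ha, hc]; omega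
      refine ⟨?_, ?_, ?_⟩
      · rw [h1, h3, ← zpow_natCast ((p:ℝ) ^ (-(c (j,d)) : ℤ)) 2, ← zpow_mul]
        apply zpow_le_zpow_right₀ hp1.le
        omega
      · rw [h1]; exact h2
      · rw [h1, h3]
        apply (zpow_lt_zpow_iff_right₀ hp1).2
        omega
  -- disjointness
  have hTdisj : Pairwise (Function.onFun Disjoint T) := by
    rintro ⟨j, d⟩ ⟨j', d'⟩ hne
    have hinj := zpow_right_injective₀ hp0 (ne_of_gt hp1)
    have hac : a (j,d) ≠ a (j',d') ∨ c (j,d) ≠ c (j',d') := by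
      by_contra h
      push_neg at h
      obtain ⟨h1, h2⟩ := h
      simp only [ha, hc] at h1 h2
      have : j = j' ∧ d = d' := by omega
      exact hne (by simp [Prod.ext_iff, this.1, this.2])
    refine Set.disjoint_left.2 fun w hw hw' => ?_
    simp only [hT, Set.mem_prod, Set.mem_setOf_eq] at hw hw'
    rcases hac with h | h
    · refine h ?_
      have heq : ((p:ℝ) ^ (-(a (j,d)) : ℤ)) = (p:ℝ) ^ (-(a (j',d')) : ℤ) :=
        hw.1.symm.trans hw'.1
      have := hinj heq
      omega
    · refine h ?_
      have heq : ((p:ℝ) ^ (-(c (j,d)) : ℤ)) = (p:ℝ) ^ (-(c (j',d')) : ℤ) :=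
        hw.2.2.symm.trans hw'.2.2
      have := hinj heq
      omega
  -- measurability
  have hball_meas : ∀ n : ℕ, MeasurableSet {x : ℤ_[p] | ‖x‖ ≤ (p:ℝ) ^ (-n : ℤ)} := fun n =>
    (isClosed_le continuous_norm continuous_const).measurableSet
  have hsph_meas : ∀ n : ℕ, MeasurableSet {x : ℤ_[p] | ‖x‖ = (p:ℝ) ^ (-n : ℤ)} := fun n =>
    (isClosed_eq continuous_norm continuous_const).measurableSet
  have hTmeas : ∀ q, MeasurableSet (T q) := fun q =>
    (hsph_meas _).prod ((hball_meas _).prod (hsph_meas _))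
  -- measures of pieces
  have hball : ∀ n : ℕ, μ {x : ℤ_[p] | ‖x‖ ≤ (p:ℝ) ^ (-n : ℤ)}
      = ENNReal.ofReal ((p:ℝ) ^ (-n : ℤ)) := fun n => by
    rw [ball_meas μ hμ n, pinv_ofReal]
  have hsph : ∀ n : ℕ, μ {x : ℤ_[p] | ‖x‖ = (p:ℝ) ^ (-n : ℤ)}
      = ENNReal.ofReal ((1 - (p:ℝ)⁻¹) * (p:ℝ) ^ (-n : ℤ)) := fun n =>
    sphere_meas μ hμ n (fun m => ball_meas μ hμ m)
  have hTmeasure : ∀ q, ν (T q) = ENNReal.ofReal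
      (((1 - (p:ℝ)⁻¹) * (p:ℝ) ^ (-(a q) : ℤ)) *
        ((p:ℝ) ^ (-(a q) : ℤ) * ((1 - (p:ℝ)⁻¹) * (p:ℝ) ^ (-(c q) : ℤ)))) := fun q => by
    rw [hν, hT]
    rw [Measure.prod_prod, Measure.prod_prod, hsph, hball, hsph,
      ← ENNReal.ofReal_mul (by positivity), ← ENNReal.ofReal_mul (by positivity)]
  -- the integrand
  set f : ℤ_[p] × ℤ_[p] × ℤ_[p] → ℝ := fun w => ‖w.1‖ ^ (s₁ - 2) * ‖w.2.2‖ ^ (s₂ - 1) with hf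
  have hf_cont : Continuous f :=
    ((continuous_fst.norm).rpow_const (fun w => Or.inr (by linarith))).mul
      ((continuous_snd.snd.norm).rpow_const (fun w => Or.inr (by linarith)))
  -- real term
  set term : ℕ × ℕ → ℝ := fun q =>
    (((p:ℝ) ^ (-(a q) : ℤ)) ^ (s₁ - 2) * ((p:ℝ) ^ (-(c q) : ℤ)) ^ (s₂ - 1)) *
      (((1 - (p:ℝ)⁻¹) * (p:ℝ) ^ (-(a q) : ℤ)) *
        ((p:ℝ) ^ (-(a q) : ℤ) * ((1 - (p:ℝ)⁻¹) * (p:ℝ) ^ (-(c q) : ℤ)))) with hterm_def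
  -- lintegral over each piece
  have hterm : ∀ q, ∫⁻ w in T q, ENNReal.ofReal (f w) ∂ν = ENNReal.ofReal (term q) := by
    intro q
    have hcongr : ∀ w ∈ T q, ENNReal.ofReal (f w)
        = ENNReal.ofReal (((p:ℝ) ^ (-(a q) : ℤ)) ^ (s₁ - 2) *
            ((p:ℝ) ^ (-(c q) : ℤ)) ^ (s₂ - 1)) := by
      rintro ⟨x, y, z⟩ hw
      simp only [hT, Set.mem_prod, Set.mem_setOf_eq] at hw
      simp only [hf]
      rw [hw.1, hw.2.2]
    rw [setLIntegral_congr_fun (hTmeas q) hcongr,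
      setLIntegral_const, hTmeasure q, ← ENNReal.ofReal_mul (by positivity)]
  -- term identity
  have hterm_eq : ∀ q : ℕ × ℕ, term q
      = (1 - (p:ℝ)⁻¹)^2 * ((X^2*Y)^(q.1+1) * (X*Y)^(q.2)) := by
    rintro ⟨j, d⟩
    have hrp : ∀ (m : ℕ) (t : ℝ), ((p:ℝ) ^ (-(m:ℤ))) ^ t = ((p:ℝ) ^ (-t)) ^ m := by
      intro m t
      rw [← Real.rpow_intCast (p:ℝ) (-(m:ℤ)), ← Real.rpow_natCast ((p:ℝ) ^ (-t)) m,
        ← Real.rpow_mul hp0.le, ← Real.rpow_mul hp0.le]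
      congr 1
      push_cast
      ring
    have hzn : ∀ m : ℕ, (p:ℝ) ^ (-(m:ℤ)) = ((p:ℝ)⁻¹) ^ m := by
      intro m
      rw [zpow_neg, zpow_natCast, inv_pow]
    have hXeq : X = (p:ℝ) ^ (-(s₁-2)) * ((p:ℝ)⁻¹ * (p:ℝ)⁻¹) := by
      rw [hX, show -s₁ = -(s₁-2) + (-1 + -1) by ring, Real.rpow_add hp0,
        Real.rpow_add hp0, Real.rpow_neg_one]
    have hYeq : Y = (p:ℝ) ^ (-(s₂-1)) * (p:ℝ)⁻¹ := by
      rw [hY, show -s₂ = -(s₂-1) + -1 by ring, Real.rpow_add hp0, Real.rpow_neg_one]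
    simp only [hterm_def, ha, hc]
    rw [hrp, hrp]
    simp only [hzn]
    rw [hXeq, hYeq]
    ring
  have hterm_nonneg : ∀ q : ℕ × ℕ, 0 ≤ term q := by
    intro q
    rw [hterm_eq q]
    exact mul_nonneg (sq_nonneg _)
      (mul_nonneg (pow_nonneg hr₁0.le _) (pow_nonneg hr₂0.le _))
  -- integral to lintegral to tsum
  have hint : ∫ w in {w : ℤ_[p] × ℤ_[p] × ℤ_[p] |
        ‖w.2.2‖ ^ 2 ≤ ‖w.1‖ ∧ ‖w.2.1‖ ≤ ‖w.1‖ ∧ ‖w.1‖ < ‖w.2.2‖}, f w ∂ν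
      = ∑' q : ℕ × ℕ, term q := by
    rw [MeasureTheory.integral_eq_lintegral_of_nonneg_ae
        (Filter.Eventually.of_forall fun w => by positivity)
        hf_cont.aestronglyMeasurable, hS, lintegral_iUnion hTmeas hTdisj]
    simp only [hterm]
    rw [ENNReal.tsum_toReal_eq (fun q => ENNReal.ofReal_ne_top)]
    exact tsum_congr fun q => ENNReal.toReal_ofReal (hterm_nonneg q)
  rw [hint]
  -- sum computation
  have hpow : (fun j : ℕ => (X^2*Y)^(j+1)) = fun j => (X^2*Y) * (X^2*Y)^j :=
    funext fun j => pow_succ' _ _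
  have hu_sum : Summable (fun j : ℕ => (X^2*Y)^(j+1)) := by
    rw [hpow]
    exact (summable_geometric_of_lt_one hr₁0.le hr₁1).mul_left (X^2*Y)
  have hv_sum : Summable (fun d : ℕ => (X*Y)^d) := summable_geometric_of_lt_one hr₂0.le hr₂1
  have hprod_sum : Summable (fun q : ℕ × ℕ => (X^2*Y)^(q.1+1) * (X*Y)^(q.2)) :=
    Summable.mul_of_nonneg hu_sum hv_sum (fun j => pow_nonneg hr₁0.le _)
      (fun d => pow_nonneg hr₂0.le _)
  have hsum : ∑' q : ℕ × ℕ, term q = (1 - (p:ℝ)⁻¹)^2 *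
      ((X^2*Y) * (1 - X^2*Y)⁻¹ * (1 - X*Y)⁻¹) := by
    calc ∑' q : ℕ × ℕ, term q
        = ∑' q : ℕ × ℕ, (1 - (p:ℝ)⁻¹)^2 * ((X^2*Y)^(q.1+1) * (X*Y)^(q.2)) :=
          tsum_congr hterm_eq
      _ = (1 - (p:ℝ)⁻¹)^2 * ∑' q : ℕ × ℕ, (X^2*Y)^(q.1+1) * (X*Y)^(q.2) := tsum_mul_left
      _ = (1 - (p:ℝ)⁻¹)^2 * ((X^2*Y) * (1 - X^2*Y)⁻¹ * (1 - X*Y)⁻¹) := by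
          congr 1
          rw [Summable.tsum_prod' hprod_sum (fun j => hv_sum.mul_left ((X^2*Y)^(j+1)))]
          calc ∑' (j : ℕ), ∑' (d : ℕ), (X^2*Y)^(j+1) * (X*Y)^d
              = ∑' (j : ℕ), (X^2*Y)^(j+1) * ∑' (d : ℕ), (X*Y)^d := by
                exact tsum_congr fun j => tsum_mul_left
            _ = (∑' (j : ℕ), (X^2*Y)^(j+1)) * ∑' (d : ℕ), (X*Y)^d := tsum_mul_right
            _ = ((X^2*Y) * (1 - X^2*Y)⁻¹) * (1 - X*Y)⁻¹ := by
                rw [tsum_geometric_of_lt_one hr₂0.le hr₂1]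
                congr 1
                rw [hpow, tsum_mul_left, tsum_geometric_of_lt_one hr₁0.le hr₁1]
            _ = (X^2*Y) * (1 - X^2*Y)⁻¹ * (1 - X*Y)⁻¹ := by ring
  rw [hsum]
  have h1 : (1 : ℝ) - X^2*Y ≠ 0 := by linarith
  have h2 : (1 : ℝ) - X*Y ≠ 0 := by linarith
  have h3 : (1 - (p:ℝ)⁻¹) ≠ 0 := ne_of_gt hq0
  rw [inv_mul_cancel_left₀ (pow_ne_zero 2 h3), div_eq_mul_inv, mul_inv]
  ring
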